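/- Let a : ℝ → ℝ be continuous, and let u, v : ℝ → ℝ be twice differentiable functions satisfying u''(t) + a(t)·u(t) = 0 and v''(t) + a(t)·v(t) = 0 for all t. Let W = u(0)·v'(0) − u'(0)·v(0), and for real constants A, B, C set w(t) = A·u(t)² + 2B·u(t)·v(t) + C·v(t)². Then for all t, w(t)·w''(t) − (1/2)·w'(t)² + 2·a(t)·w(t)² = 2·(A·C − B²)·W². -/

import Mathlib

/-- For `u, v` solving `z'' + a(t)z = 0` with Wronskian `W` and
`w = Au² + 2Buv + Cv²`, the first integral of the integrated third-order
equation evaluates to `2(AC − B²)W²`. -/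
theorem first_integral_value
    (a : ℝ → ℝ) (ha : Continuous a)
    (u v : ℝ → ℝ)
    (hu : Differentiable ℝ u) (hu' : Differentiable ℝ (deriv u))
    (hv : Differentiable ℝ v) (hv' : Differentiable ℝ (deriv v))
    (hueq : ∀ t, deriv (deriv u) t + a t * u t = 0)
    (hveq : ∀ t, deriv (deriv v) t + a t * v t = 0)
    (W : ℝ) (hW : W = u 0 * deriv v 0 - deriv u 0 * v 0)
    (A B C : ℝ) :
    ∀ t, (fun s => A * u s ^ 2 + 2 * B * u s * v s + C * v s ^ 2) t
          * deriv (deriv fun s => A * u s ^ 2 + 2 * B * u s * v s + C * v s ^ 2) t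
        - (1 / 2) * (deriv (fun s => A * u s ^ 2 + 2 * B * u s * v s + C * v s ^ 2) t) ^ 2
        + 2 * a t * ((fun s => A * u s ^ 2 + 2 * B * u s * v s + C * v s ^ 2) t) ^ 2
        = 2 * (A * C - B ^ 2) * W ^ 2 := by
  have hDu : ∀ s, HasDerivAt u (deriv u s) s := fun s => (hu s).hasDerivAt
  have hDv : ∀ s, HasDerivAt v (deriv v s) s := fun s => (hv s).hasDerivAt
  have hDu' : ∀ s, HasDerivAt (deriv u) (deriv (deriv u) s) s :=
    fun s => (hu' s).hasDerivAt
  have hDv' : ∀ s, HasDerivAt (deriv v) (deriv (deriv v) s) s :=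
    fun s => (hv' s).hasDerivAt
  -- Wronskian is constant
  have hWt : ∀ t, u t * deriv v t - deriv u t * v t = W := by
    intro t
    have hD : ∀ s, HasDerivAt (fun s => u s * deriv v s - deriv u s * v s) 0 s := by
      intro s
      have h := ((hDu s).mul (hDv' s)).sub ((hDu' s).mul (hDv s))
      have hval : deriv u s * deriv v s + u s * deriv (deriv v) s -
          (deriv (deriv u) s * v s + deriv u s * deriv v s) = 0 := by
        have h1 : deriv (deriv u) s = -(a s * u s) := by linarith [hueq s]
        have h2 : deriv (deriv v) s = -(a s * v s) := by linarith [hveq s]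
        rw [h1, h2]; ring
      rwa [hval] at h
    have hconst := is_const_of_deriv_eq_zero (f := fun s => u s * deriv v s - deriv u s * v s)
      (fun s => ((hD s).differentiableAt)) (fun s => (hD s).deriv) t 0
    simpa [hW] using hconst
  -- first derivative of w
  have hw1 : ∀ s, HasDerivAt (fun s => A * u s ^ 2 + 2 * B * u s * v s + C * v s ^ 2)
      (2 * A * u s * deriv u s + 2 * B * (deriv u s * v s + u s * deriv v s)
        + 2 * C * v s * deriv v s) s := by
    intro s
    have heq : (fun s => A * u s ^ 2 + 2 * B * u s * v s + C * v s ^ 2)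
        = (fun x => A * u x ^ 2 + 2 * B * (u x * v x) + C * v x ^ 2) := by
      funext x; ring
    rw [heq]
    have h := ((((hDu s).pow 2).const_mul A).add
        (((hDu s).mul (hDv s)).const_mul (2 * B))).add (((hDv s).pow 2).const_mul C)
    refine h.congr_deriv ?_
    push_cast
    ring
  have hderiv1 : deriv (fun s => A * u s ^ 2 + 2 * B * u s * v s + C * v s ^ 2)
      = fun s => 2 * A * u s * deriv u s + 2 * B * (deriv u s * v s + u s * deriv v s)
        + 2 * C * v s * deriv v s := funext fun s => (hw1 s).deriv
  intro t
  -- second derivative of w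
  have hw2 : HasDerivAt (fun s => 2 * A * u s * deriv u s
      + 2 * B * (deriv u s * v s + u s * deriv v s) + 2 * C * v s * deriv v s)
      (2 * A * (deriv u t ^ 2 + u t * deriv (deriv u) t)
        + 2 * B * (deriv (deriv u) t * v t + 2 * deriv u t * deriv v t + u t * deriv (deriv v) t)
        + 2 * C * (deriv v t ^ 2 + v t * deriv (deriv v) t)) t := by
    have heq : (fun s => 2 * A * u s * deriv u s
        + 2 * B * (deriv u s * v s + u s * deriv v s) + 2 * C * v s * deriv v s)
        = (fun x => 2 * A * (u x * deriv u x)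
          + 2 * B * (deriv u x * v x + u x * deriv v x) + 2 * C * (v x * deriv v x)) := by
      funext x; ring
    rw [heq]
    have h := ((((hDu t).mul (hDu' t)).const_mul (2 * A)).add
        ((((hDu' t).mul (hDv t)).add ((hDu t).mul (hDv' t))).const_mul (2 * B))).add
        (((hDv t).mul (hDv' t)).const_mul (2 * C))
    refine h.congr_deriv ?_
    ring
  have hderiv2 : deriv (deriv fun s => A * u s ^ 2 + 2 * B * u s * v s + C * v s ^ 2) t
      = 2 * A * (deriv u t ^ 2 + u t * deriv (deriv u) t)
        + 2 * B * (deriv (deriv u) t * v t + 2 * deriv u t * deriv v t + u t * deriv (deriv v) t)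
        + 2 * C * (deriv v t ^ 2 + v t * deriv (deriv v) t) := by
    rw [hderiv1]; exact hw2.deriv
  have h1 : deriv (deriv u) t = -(a t * u t) := by linarith [hueq t]
  have h2 : deriv (deriv v) t = -(a t * v t) := by linarith [hveq t]
  have hWr := hWt t
  rw [hderiv2, hderiv1]
  simp only [h1, h2]
  rw [← hWr]
  ring
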